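/- Suppose g is real-analytic at 0 with power-series expansion g(x) = x − ε·x³ + O(|x|⁴) where ε > 0. Let a₂ < 0 < a₁ be two real points in the basin of attraction of 0, i.e. gⁿ(aᵢ) is defined and nonzero for every n ≥ 0 and gⁿ(aᵢ) → 0 as n → ∞, for i = 1, 2. Then there exists K > 0 such that for every n ≥ 0: K ≤ |gⁿ(a₂)|/|gⁿ(a₁)| ≤ K⁻¹. -/

import Mathlib

open Set Filter Topology Asymptotics


private lemma abs4_littleO_pow (k : ℕ) (hk : k ≤ 3) :
    (fun x : ℝ => |x| ^ 4) =o[nhds (0:ℝ)] fun x : ℝ => x ^ k := by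
  rw [Asymptotics.isLittleO_iff]
  intro c hc
  have : ∀ᶠ x : ℝ in nhds 0, |x| < min c 1 := by
    have := Metric.ball_mem_nhds (0:ℝ) (lt_min hc one_pos)
    filter_upwards [this] with x hx
    simpa [Real.dist_eq] using hx
  filter_upwards [this] with x hx
  have h1 : |x| ≤ 1 := le_of_lt (lt_of_lt_of_le hx (min_le_right _ _))
  have h2 : |x| ≤ c := le_of_lt (lt_of_lt_of_le hx (min_le_left _ _))
  have hax : 0 ≤ |x| := abs_nonneg x
  have : |x| ^ 4 ≤ c * |x| ^ k := by
    calc |x| ^ 4 = |x| ^ (4 - (k+1)) * |x| * |x| ^ k := by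
          rw [mul_assoc, ← pow_succ']
          rw [← pow_add]
          congr 1
          omega
      _ ≤ 1 * c * |x| ^ k := by
          apply mul_le_mul _ le_rfl (by positivity) (by norm_num [hc.le])
          exact mul_le_mul (pow_le_one₀ hax h1) h2 hax one_pos.le
      _ = c * |x| ^ k := by ring
  simpa [abs_of_nonneg hax, abs_pow] using this

private lemma Flim (g : ℝ → ℝ) (ε : ℝ)
    (hexp : (fun x : ℝ => g x - (x - ε * x ^ 3)) =O[nhds (0:ℝ)] fun x : ℝ => |x| ^ 4) :
    Tendsto (fun x : ℝ => ((g x) ^ 2)⁻¹ - (x ^ 2)⁻¹) (nhdsWithin 0 {0}ᶜ)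
      (nhds (2 * ε)) := by
  set h : ℝ → ℝ := fun x => g x - (x - ε * x ^ 3) with hh
  have T1 : Tendsto (fun x : ℝ => h x / x) (nhds 0) (nhds 0) :=
    (hexp.trans_isLittleO (abs4_littleO_pow 1 (by norm_num))).tendsto_div_nhds_zero.congr
      (fun x => by rw [pow_one])
  have T3 : Tendsto (fun x : ℝ => h x / x ^ 3) (nhds 0) (nhds 0) :=
    (hexp.trans_isLittleO (abs4_littleO_pow 3 le_rfl)).tendsto_div_nhds_zero
  have Tq : Tendsto (fun x : ℝ => ε * x ^ 2) (nhds 0) (nhds 0) := by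
    have : Continuous fun x : ℝ => ε * x ^ 2 := by continuity
    simpa using this.tendsto 0
  -- g x / x → 1 on punctured nbhd
  have T2 : Tendsto (fun x : ℝ => g x / x) (nhdsWithin 0 {0}ᶜ) (nhds 1) := by
    have base : Tendsto (fun x : ℝ => 1 - ε * x ^ 2 + h x / x) (nhdsWithin 0 {0}ᶜ)
        (nhds 1) := by
      have : Tendsto (fun x : ℝ => 1 - ε * x ^ 2 + h x / x) (nhds 0) (nhds (1 - 0 + 0)) :=
        ((tendsto_const_nhds.sub Tq).add T1)
      simpa using this.mono_left nhdsWithin_le_nhds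
    refine base.congr' ?_
    filter_upwards [self_mem_nhdsWithin] with x hx
    have hx0 : x ≠ 0 := hx
    field_simp [hh]
    ring
  -- eventually g x ≠ 0
  have hgne : ∀ᶠ x in nhdsWithin (0:ℝ) {0}ᶜ, g x ≠ 0 := by
    have : ∀ᶠ x in nhdsWithin (0:ℝ) {0}ᶜ, g x / x ≠ 0 := by
      have := T2.eventually_ne (one_ne_zero)
      filter_upwards [this] with x hx
      exact hx
    filter_upwards [this, self_mem_nhdsWithin] with x hx hx0
    intro hg0
    exact hx (by simp [hg0])
  have TG : Tendsto (fun x : ℝ =>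
      (ε - h x / x ^ 3) * (2 - ε * x ^ 2 + h x / x) / (g x / x) ^ 2)
      (nhdsWithin 0 {0}ᶜ) (nhds (2 * ε)) := by
    have num : Tendsto (fun x : ℝ => (ε - h x / x ^ 3) * (2 - ε * x ^ 2 + h x / x))
        (nhdsWithin 0 {0}ᶜ) (nhds (2 * ε)) := by
      have : Tendsto (fun x : ℝ => (ε - h x / x ^ 3) * (2 - ε * x ^ 2 + h x / x))
          (nhds 0) (nhds ((ε - 0) * (2 - 0 + 0))) :=
        (tendsto_const_nhds.sub T3).mul ((tendsto_const_nhds.sub Tq).add T1)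
      have h' : Tendsto (fun x : ℝ => (ε - h x / x ^ 3) * (2 - ε * x ^ 2 + h x / x))
          (nhdsWithin 0 {0}ᶜ) (nhds ((ε - 0) * (2 - 0 + 0))) := this.mono_left nhdsWithin_le_nhds
      convert h' using 2
      ring
    have den : Tendsto (fun x : ℝ => (g x / x) ^ 2) (nhdsWithin 0 {0}ᶜ) (nhds 1) := by
      simpa using T2.pow 2
    have := num.div den one_ne_zero
    simpa only [div_one, Pi.div_def] using this
  refine TG.congr' ?_
  filter_upwards [hgne, self_mem_nhdsWithin] with x hgx hx0
  have hx0' : (x:ℝ) ≠ 0 := hx0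
  field_simp [hh]
  ring

private lemma key (g : ℝ → ℝ) (ε : ℝ) (hε : 0 < ε)
    (hexp : (fun x : ℝ => g x - (x - ε * x ^ 3)) =O[nhds (0:ℝ)] fun x : ℝ => |x| ^ 4)
    (a : ℝ) (hne : ∀ n : ℕ, g^[n] a ≠ 0)
    (hlim : Tendsto (fun n : ℕ => g^[n] a) atTop (nhds 0)) :
    Tendsto (fun n : ℕ => (n : ℝ) * (g^[n] a) ^ 2) atTop (nhds ((2 * ε)⁻¹)) := by
  set x : ℕ → ℝ := fun n => g^[n] a with hx
  set u : ℕ → ℝ := fun n => ((x n) ^ 2)⁻¹ with hu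
  have hxne : ∀ n, x n ≠ 0 := hne
  have hxlim : Tendsto x atTop (nhdsWithin 0 {0}ᶜ) :=
    tendsto_nhdsWithin_of_tendsto_nhds_of_eventually_within _ hlim
      (Eventually.of_forall fun n => hxne n)
  have hd : Tendsto (fun n => u (n + 1) - u n) atTop (nhds (2 * ε)) := by
    have := (Flim g ε hexp).comp hxlim
    refine this.congr fun n => ?_
    simp only [Function.comp, hu, hx, Function.iterate_succ_apply']
  have hc := hd.cesaro
  have hsum : ∀ n : ℕ, ∑ i ∈ Finset.range n, (u (i + 1) - u i) = u n - u 0 :=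
    fun n => Finset.sum_range_sub u n
  have hc2 : Tendsto (fun n : ℕ => (n : ℝ)⁻¹ * (u n - u 0)) atTop (nhds (2 * ε)) := by
    refine hc.congr fun n => ?_
    rw [hsum]
  have hz : Tendsto (fun n : ℕ => (n : ℝ)⁻¹ * u 0) atTop (nhds 0) := by
    simpa using tendsto_inv_atTop_nhds_zero_nat.mul_const (u 0)
  have hun : Tendsto (fun n : ℕ => (n : ℝ)⁻¹ * u n) atTop (nhds (2 * ε)) := by
    have := hc2.add hz
    simp only [add_zero] at this
    refine this.congr fun n => ?_
    ring
  have h2e : (2 * ε) ≠ 0 := by positivity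
  have := hun.inv₀ h2e
  refine this.congr' ?_
  filter_upwards [eventually_ge_atTop 1] with n hn
  have hn0 : (n : ℝ) ≠ 0 := Nat.cast_ne_zero.2 (by omega)
  have hun0 : u n ≠ 0 := by
    simp only [hu]
    exact inv_ne_zero (pow_ne_zero _ (hxne n))
  rw [mul_inv, inv_inv, hu, inv_inv]

/-- (Comparison of Fatou coordinates on both sides of a parabolic point.)
If `g(x) = x - ε·x³ + O(|x|⁴)` with `ε > 0` and `a₂ < 0 < a₁` both lie in the basin of
attraction of `0`, then the ratios `|gⁿ(a₂)|/|gⁿ(a₁)|` are bounded above and below by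
positive constants, uniformly in `n`. -/
theorem statement16 (g : ℝ → ℝ) (ε : ℝ) (hε : 0 < ε)
    (hg : AnalyticAt ℝ g 0)
    (hexp : (fun x : ℝ => g x - (x - ε * x ^ 3)) =O[nhds (0:ℝ)] fun x : ℝ => |x| ^ 4)
    (a₁ a₂ : ℝ) (ha₂ : a₂ < 0) (ha₁ : 0 < a₁)
    (hb₁ : (∀ n : ℕ, g^[n] a₁ ≠ 0) ∧
      Filter.Tendsto (fun n : ℕ => g^[n] a₁) Filter.atTop (nhds 0))
    (hb₂ : (∀ n : ℕ, g^[n] a₂ ≠ 0) ∧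
      Filter.Tendsto (fun n : ℕ => g^[n] a₂) Filter.atTop (nhds 0)) :
    ∃ K : ℝ, 0 < K ∧ ∀ n : ℕ,
      K ≤ |g^[n] a₂| / |g^[n] a₁| ∧ |g^[n] a₂| / |g^[n] a₁| ≤ K⁻¹ := by
  obtain ⟨hne₁, hlim₁⟩ := hb₁
  obtain ⟨hne₂, hlim₂⟩ := hb₂
  set r : ℕ → ℝ := fun n => |g^[n] a₂| / |g^[n] a₁| with hr
  have hrpos : ∀ n, 0 < r n := fun n =>
    div_pos (abs_pos.2 (hne₂ n)) (abs_pos.2 (hne₁ n))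
  have h1 := key g ε hε hexp a₁ hne₁ hlim₁
  have h2 := key g ε hε hexp a₂ hne₂ hlim₂
  have h2e : ((2 * ε)⁻¹ : ℝ) ≠ 0 := by positivity
  have hr2 : Tendsto (fun n => (r n) ^ 2) atTop (nhds 1) := by
    have hdiv := h2.div h1 h2e
    rw [div_self h2e] at hdiv
    refine hdiv.congr' ?_
    filter_upwards [eventually_ge_atTop 1] with n hn
    have hn0 : (n : ℝ) ≠ 0 := Nat.cast_ne_zero.2 (by omega)
    have h10 : (g^[n] a₁) ≠ 0 := hne₁ n
    rw [hr, Pi.div_apply, div_pow, sq_abs, sq_abs]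
    field_simp
  have hrlim : Tendsto r atTop (nhds 1) := by
    have := (Real.continuous_sqrt.tendsto 1).comp hr2
    rw [Real.sqrt_one] at this
    refine this.congr fun n => ?_
    simp only [Function.comp]
    exact Real.sqrt_sq (hrpos n).le
  rw [Metric.tendsto_atTop] at hrlim
  obtain ⟨N, hN⟩ := hrlim (1/2) (by norm_num)
  have hband : ∀ n, N ≤ n → 1/2 ≤ r n ∧ r n ≤ 3/2 := by
    intro n hn
    have := hN n hn
    rw [Real.dist_eq, abs_lt] at this
    constructor <;> linarith [this.1, this.2]
  set s : Finset ℕ := Finset.range (N + 1) with hs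
  have hsne : s.Nonempty := ⟨N, by simp [hs]⟩
  set m₀ : ℝ := s.inf' hsne r with hm₀
  set M₀ : ℝ := s.sup' hsne r with hM₀
  have hm₀pos : 0 < m₀ := (Finset.lt_inf'_iff hsne).2 fun b _ => hrpos b
  set M : ℝ := max M₀ (3/2) with hM
  have hMpos : 0 < M := lt_of_lt_of_le (by norm_num) (le_max_right _ _)
  set K : ℝ := min (min m₀ (1/2)) M⁻¹ with hK
  have hKpos : 0 < K := lt_min (lt_min hm₀pos (by norm_num)) (inv_pos.2 hMpos)
  have hKM : M ≤ K⁻¹ := by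
    have h1 : K ≤ M⁻¹ := min_le_right _ _
    calc M = (M⁻¹)⁻¹ := (inv_inv M).symm
      _ ≤ K⁻¹ := inv_anti₀ hKpos h1
  refine ⟨K, hKpos, fun n => ?_⟩
  rcases le_or_gt N n with hn | hn
  · obtain ⟨hl, hu⟩ := hband n hn
    constructor
    · calc K ≤ min m₀ (1/2) := min_le_left _ _
        _ ≤ 1/2 := min_le_right _ _
        _ ≤ r n := hl
    · calc r n ≤ 3/2 := hu
        _ ≤ M := le_max_right _ _
        _ ≤ K⁻¹ := hKM
  · have hns : n ∈ s := by simp [hs]; omega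
    constructor
    · calc K ≤ min m₀ (1/2) := min_le_left _ _
        _ ≤ m₀ := min_le_left _ _
        _ ≤ r n := Finset.inf'_le r hns
    · calc r n ≤ M₀ := Finset.le_sup' r hns
        _ ≤ M := le_max_left _ _
        _ ≤ K⁻¹ := hKM
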